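/- arXiv:1904.09395 — 6 statements merged into one kernel-verified Lean document; each statement's English description precedes it below -/
import Mathlib

section
/- For every integer n ≥ 1, Γ(2 + n/2) < (π(n + 17)/17)^{n/2}, where Γ denotes the real Gamma function. -/
set_option maxHeartbeats 1000000

open Real

/-- Derivative computation for the Padé auxiliary function. -/
private lemma pade_hasDerivAt (t : ℝ) (ht : -1 < t) :
    HasDerivAt (fun y : ℝ => Real.log (1 + y) - 2 * y / (y + 2))
      ((1 + t)⁻¹ - 4 / (t + 2) ^ 2) t := by
  have h1 : HasDerivAt (fun y : ℝ => 1 + y) 1 t := by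
    simpa using (hasDerivAt_id t).const_add (1 : ℝ)
  have h2 : HasDerivAt (fun y : ℝ => Real.log (1 + y)) (1 / (1 + t)) t :=
    h1.log (by linarith)
  have h3 : HasDerivAt (fun y : ℝ => 2 * y) 2 t := by
    simpa using (hasDerivAt_id t).const_mul (2 : ℝ)
  have h4 : HasDerivAt (fun y : ℝ => y + 2) 1 t := by
    simpa using (hasDerivAt_id t).add_const (2 : ℝ)
  have h5 : HasDerivAt (fun y : ℝ => 2 * y / (y + 2))
      ((2 * (t + 2) - 2 * t * 1) / (t + 2) ^ 2) t := h3.div h4 (by linarith)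
  have h6 := h2.sub h5
  refine h6.congr_deriv ?_
  have ht2 : t + 2 ≠ 0 := by linarith
  ring

/-- Padé lower bound for the logarithm: `2x/(x+2) ≤ log(1+x)` for `x ≥ 0`. -/
private lemma pade {x : ℝ} (hx : 0 ≤ x) : 2 * x / (x + 2) ≤ Real.log (1 + x) := by
  have hmono : MonotoneOn (fun y : ℝ => Real.log (1 + y) - 2 * y / (y + 2))
      (Set.Ici (0 : ℝ)) := by
    apply monotoneOn_of_deriv_nonneg (convex_Ici 0)
    · intro y hy
      have hy0 : (0:ℝ) ≤ y := hy
      exact (pade_hasDerivAt y (by linarith)).continuousAt.continuousWithinAt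
    · intro y hy
      rw [interior_Ici] at hy
      have hy0 : (0:ℝ) < y := hy
      exact (pade_hasDerivAt y (by linarith)).differentiableAt.differentiableWithinAt
    · intro y hy
      rw [interior_Ici] at hy
      have hy0 : (0:ℝ) < y := hy
      rw [(pade_hasDerivAt y (by linarith)).deriv]
      have hkey : (1 + y)⁻¹ - 4 / (y + 2) ^ 2 = y ^ 2 / ((1 + y) * (y + 2) ^ 2) := by
        field_simp
        ring
      rw [hkey]
      positivity
  have h0 := hmono (Set.mem_Ici.2 (le_refl (0:ℝ))) (Set.mem_Ici.2 hx) hx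
  simp only [Real.log_one] at h0
  norm_num at h0
  linarith

/-- Padé lower bound for `log` of a ratio. -/
private lemma log_ratio {a b : ℝ} (ha : 0 < a) (hab : a ≤ b) :
    2 * (b - a) / (a + b) ≤ Real.log b - Real.log a := by
  have hx : (0:ℝ) ≤ (b - a) / a := by
    apply div_nonneg (by linarith) ha.le
  have h := pade hx
  have hb : 0 < b := lt_of_lt_of_le ha hab
  have h1 : 1 + (b - a) / a = b / a := by field_simp; ring
  rw [h1, Real.log_div hb.ne' ha.ne'] at h
  have h2 : 2 * ((b - a) / a) / ((b - a) / a + 2) = 2 * (b - a) / (a + b) := by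
    rw [show (b - a) / a + 2 = (a + b) / a by field_simp; ring]
    rw [mul_div_assoc', div_div_div_cancel_right₀ ha.ne']
  rw [h2] at h
  exact h

/-- Tangent-line upper bound for `log`. -/
private lemma log_tangent {y c : ℝ} (hy : 0 < y) (hc : 0 < c) :
    Real.log y ≤ y / c - 1 + Real.log c := by
  have h := Real.log_le_sub_one_of_pos (show 0 < y / c by positivity)
  have h2 : Real.log (y / c) = Real.log y - Real.log c := Real.log_div hy.ne' hc.ne'
  linarith [h2 ▸ h]

/-- Stirling-type upper bound for `log n!`. -/
private lemma log_factorial_le (N : ℕ) (hN : 1 ≤ N) :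
    Real.log (Nat.factorial N) ≤ 1 + ((N : ℝ) + 1/2) * Real.log N - N := by
  induction N, hN using Nat.le_induction with
  | base => simp
  | succ N hN ih =>
    have hN0 : (0:ℝ) < N := by exact_mod_cast hN
    have hfac : (0:ℝ) < (Nat.factorial N : ℝ) := by
      exact_mod_cast Nat.factorial_pos N
    have hstep : Real.log ((Nat.factorial (N+1) : ℕ) : ℝ)
        = Real.log ((N:ℝ) + 1) + Real.log (Nat.factorial N) := by
      rw [Nat.factorial_succ]
      push_cast
      rw [Real.log_mul (by linarith) hfac.ne']
    have hpade := pade (x := 1/(N:ℝ)) (by positivity)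
    have hlogd : Real.log ((N:ℝ) + 1) - Real.log N = Real.log (1 + 1/(N:ℝ)) := by
      rw [show (1:ℝ) + 1/(N:ℝ) = ((N:ℝ)+1)/N by field_simp]
      rw [Real.log_div (by linarith) hN0.ne']
    have h2 : 2 * (1/(N:ℝ)) / (1/(N:ℝ) + 2) = 2 / (2*(N:ℝ)+1) := by
      rw [div_eq_div_iff (by positivity) (by positivity)]
      field_simp
      ring
    rw [h2] at hpade
    have hkey : 1 ≤ ((N:ℝ) + 1/2) * (Real.log ((N:ℝ)+1) - Real.log N) := by
      have hmul := mul_le_mul_of_nonneg_left (hlogd ▸ hpade) (by linarith : (0:ℝ) ≤ (N:ℝ) + 1/2)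
      have heq : ((N:ℝ) + 1/2) * (2 / (2*(N:ℝ)+1)) = 1 := by
        field_simp
      linarith [heq ▸ hmul]
    rw [hstep]
    push_cast
    nlinarith [ih, hkey]

/-- Numeric lower bound for `log (2π/17) + 1`. -/
private lemma c0_le : (0.004663 : ℝ) ≤ Real.log (2*π/17) + 1 := by
  have he : (2.7182818283 : ℝ) < Real.exp 1 := Real.exp_one_gt_d9
  have hpi : (3.141592 : ℝ) < π := Real.pi_gt_d6
  have hep : (0:ℝ) < Real.exp 1 := Real.exp_pos 1
  have hprod : (3.141592 : ℝ) * 2.7182818283 < π * Real.exp 1 := by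
    nlinarith [mul_pos (sub_pos.2 hpi) (sub_pos.2 he)]
  obtain ⟨x, hxdef⟩ : ∃ x : ℝ, x = 2*π*Real.exp 1/17 - 1 := ⟨_, rfl⟩
  have hxlb : (0.0046744 : ℝ) ≤ x := by
    rw [hxdef]; nlinarith [hprod]
  have hx0 : (0:ℝ) ≤ x := by linarith
  have h := pade hx0
  have h1 : 1 + x = (2*π/17) * Real.exp 1 := by rw [hxdef]; ring
  have h2 : Real.log ((2*π/17) * Real.exp 1) = Real.log (2*π/17) + 1 := by
    rw [Real.log_mul (by positivity) hep.ne', Real.log_exp]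
  rw [h1, h2] at h
  have h3 : (0.004663:ℝ) ≤ 2*x/(x+2) := by
    rw [le_div_iff₀ (by linarith : (0:ℝ) < x + 2)]
    nlinarith [hxlb]
  linarith

/-- Key inequality, even case. -/
private lemma Fkey (m : ℝ) (hm : 1 ≤ m) :
    (3/2) * Real.log (m+1) < 0.004663*m + 15*m/(2*m+9.5) := by
  have hL : Real.log 2 < 0.6931471808 := Real.log_two_lt_d9
  have hL0 : (0:ℝ) < Real.log 2 := Real.log_pos (by norm_num)
  have h95 : (0:ℝ) < 2*m+9.5 := by linarith
  have hm1 : (0:ℝ) < m + 1 := by linarith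
  have tb : ∀ j : ℕ, Real.log (m+1) ≤ (m+1)/2^j - 1 + (j:ℝ) * Real.log 2 := by
    intro j
    have h2j : (0:ℝ) < 2^j := by positivity
    have h := log_tangent hm1 h2j
    rwa [Real.log_pow] at h
  rcases le_or_gt m 4 with hb | ha
  · have ht := tb 1; norm_num at ht
    have hch : (30/23 : ℝ) + (114/161)*(m-1) ≤ 15*m/(2*m+9.5) := by
      rw [le_div_iff₀ h95]
      nlinarith [mul_nonneg (sub_nonneg.2 hm) (sub_nonneg.2 hb)]
    linarith
  rcases le_or_gt m 11 with hb | ha2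
  · have ht := tb 2; norm_num at ht
    have hch : (24/7 : ℝ) + (38/147)*(m-4) ≤ 15*m/(2*m+9.5) := by
      rw [le_div_iff₀ h95]
      nlinarith [mul_nonneg (sub_nonneg.2 ha.le) (sub_nonneg.2 hb)]
    linarith
  rcases le_or_gt m 22 with hb | ha3
  · have ht := tb 3; norm_num at ht
    have hch : (110/21 : ℝ) + (190/2247)*(m-11) ≤ 15*m/(2*m+9.5) := by
      rw [le_div_iff₀ h95]
      nlinarith [mul_nonneg (sub_nonneg.2 ha2.le) (sub_nonneg.2 hb)]
    linarith
  rcases le_or_gt m 44 with hb | ha4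
  · have ht := tb 4; norm_num at ht
    have hch : (660/107 : ℝ) + (38/1391)*(m-22) ≤ 15*m/(2*m+9.5) := by
      rw [le_div_iff₀ h95]
      nlinarith [mul_nonneg (sub_nonneg.2 ha3.le) (sub_nonneg.2 hb)]
    linarith
  rcases le_or_gt m 77 with hb | ha5
  · have ht := tb 5; norm_num at ht
    have hch : (88/13 : ℝ) + (38/4251)*(m-44) ≤ 15*m/(2*m+9.5) := by
      rw [le_div_iff₀ h95]
      nlinarith [mul_nonneg (sub_nonneg.2 ha4.le) (sub_nonneg.2 hb)]
    linarith
  rcases le_or_gt m 130 with hb | ha6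
  · have ht := tb 6; norm_num at ht
    have hch : (770/109 : ℝ) + (190/58751)*(m-77) ≤ 15*m/(2*m+9.5) := by
      rw [le_div_iff₀ h95]
      nlinarith [mul_nonneg (sub_nonneg.2 ha5.le) (sub_nonneg.2 hb)]
    linarith
  rcases le_or_gt m 218 with hb | ha7
  · have ht := tb 7; norm_num at ht
    have hch : (3900/539 : ℝ) + (190/160083)*(m-130) ≤ 15*m/(2*m+9.5) := by
      rw [le_div_iff₀ h95]
      nlinarith [mul_nonneg (sub_nonneg.2 ha6.le) (sub_nonneg.2 hb)]
    linarith
  rcases le_or_gt m 380 with hb | ha8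
  · have ht := tb 8; norm_num at ht
    have hch : (2180/297 : ℝ) + (10/24057)*(m-218) ≤ 15*m/(2*m+9.5) := by
      rw [le_div_iff₀ h95]
      nlinarith [mul_nonneg (sub_nonneg.2 ha7.le) (sub_nonneg.2 hb)]
    linarith
  · have ht := tb 9; norm_num at ht
    have hch : (200/27 : ℝ) ≤ 15*m/(2*m+9.5) := by
      rw [le_div_iff₀ h95]
      nlinarith [ha8]
    linarith

/-- Key inequality, odd case. -/
private lemma Gkey (k : ℝ) (hk : 1 ≤ k) :
    3 * Real.log (k+9) <
      0.009326*k + 0.004663 + (8*k+12)/(k+5) + (14*k+35)/(2*k+11) := by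
  have hL : Real.log 2 < 0.6931471808 := Real.log_two_lt_d9
  have hL0 : (0:ℝ) < Real.log 2 := Real.log_pos (by norm_num)
  have h5 : (0:ℝ) < k+5 := by linarith
  have h11 : (0:ℝ) < 2*k+11 := by linarith
  have hk9 : (0:ℝ) < k + 9 := by linarith
  have tb : ∀ j : ℕ, Real.log (k+9) ≤ (k+9)/2^j - 1 + (j:ℝ) * Real.log 2 := by
    intro j
    have h2j : (0:ℝ) < 2^j := by positivity
    have h := log_tangent hk9 h2j
    rwa [Real.log_pow] at h
  rcases le_or_gt k 16 with hb | ha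
  · have ht := tb 3; norm_num at ht
    have hch1 : (10/3 : ℝ) + (2/9)*(k-1) ≤ (8*k+12)/(k+5) := by
      rw [le_div_iff₀ h5]
      nlinarith [mul_nonneg (sub_nonneg.2 hk) (sub_nonneg.2 hb)]
    have hch2 : (49/13 : ℝ) + (84/559)*(k-1) ≤ (14*k+35)/(2*k+11) := by
      rw [le_div_iff₀ h11]
      nlinarith [mul_nonneg (sub_nonneg.2 hk) (sub_nonneg.2 hb)]
    linarith
  rcases le_or_gt k 38 with hb | ha2
  · have ht := tb 4; norm_num at ht
    have hch1 : (20/3 : ℝ) + (4/129)*(k-16) ≤ (8*k+12)/(k+5) := by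
      rw [le_div_iff₀ h5]
      nlinarith [mul_nonneg (sub_nonneg.2 ha.le) (sub_nonneg.2 hb)]
    have hch2 : (259/43 : ℝ) + (28/1247)*(k-16) ≤ (14*k+35)/(2*k+11) := by
      rw [le_div_iff₀ h11]
      nlinarith [mul_nonneg (sub_nonneg.2 ha.le) (sub_nonneg.2 hb)]
    linarith
  rcases le_or_gt k 70 with hb | ha3
  · have ht := tb 5; norm_num at ht
    have hch1 : (316/43 : ℝ) + (28/3225)*(k-38) ≤ (8*k+12)/(k+5) := by
      rw [le_div_iff₀ h5]
      nlinarith [mul_nonneg (sub_nonneg.2 ha2.le) (sub_nonneg.2 hb)]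
    have hch2 : (189/29 : ℝ) + (28/4379)*(k-38) ≤ (14*k+35)/(2*k+11) := by
      rw [le_div_iff₀ h11]
      nlinarith [mul_nonneg (sub_nonneg.2 ha2.le) (sub_nonneg.2 hb)]
    linarith
  rcases le_or_gt k 124 with hb | ha4
  · have ht := tb 6; norm_num at ht
    have hch1 : (572/75 : ℝ) + (28/9675)*(k-70) ≤ (8*k+12)/(k+5) := by
      rw [le_div_iff₀ h5]
      nlinarith [mul_nonneg (sub_nonneg.2 ha3.le) (sub_nonneg.2 hb)]
    have hch2 : (1015/151 : ℝ) + (12/5587)*(k-70) ≤ (14*k+35)/(2*k+11) := by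
      rw [le_div_iff₀ h11]
      nlinarith [mul_nonneg (sub_nonneg.2 ha3.le) (sub_nonneg.2 hb)]
    linarith
  rcases le_or_gt k 210 with hb | ha5
  · have ht := tb 7; norm_num at ht
    have hch1 : (1004/129 : ℝ) + (28/27735)*(k-124) ≤ (8*k+12)/(k+5) := by
      rw [le_div_iff₀ h5]
      nlinarith [mul_nonneg (sub_nonneg.2 ha4.le) (sub_nonneg.2 hb)]
    have hch2 : (253/37 : ℝ) + (12/15947)*(k-124) ≤ (14*k+35)/(2*k+11) := by
      rw [le_div_iff₀ h11]
      nlinarith [mul_nonneg (sub_nonneg.2 ha4.le) (sub_nonneg.2 hb)]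
    linarith
  rcases le_or_gt k 380 with hb | ha6
  · have ht := tb 8; norm_num at ht
    have hch1 : (1692/215 : ℝ) + (4/11825)*(k-210) ≤ (8*k+12)/(k+5) := by
      rw [le_div_iff₀ h5]
      nlinarith [mul_nonneg (sub_nonneg.2 ha5.le) (sub_nonneg.2 hb)]
    have hch2 : (2975/431 : ℝ) + (28/110767)*(k-210) ≤ (14*k+35)/(2*k+11) := by
      rw [le_div_iff₀ h11]
      nlinarith [mul_nonneg (sub_nonneg.2 ha5.le) (sub_nonneg.2 hb)]
    linarith
  · have ht := tb 9; norm_num at ht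
    have hch1 : (436/55 : ℝ) ≤ (8*k+12)/(k+5) := by
      rw [le_div_iff₀ h5]
      nlinarith [ha6]
    have hch2 : (1785/257 : ℝ) ≤ (14*k+35)/(2*k+11) := by
      rw [le_div_iff₀ h11]
      nlinarith [ha6]
    linarith

/-- Even case: factorial inequality. -/
private lemma even_case (m : ℕ) (hm : 1 ≤ m) :
    ((Nat.factorial (m+1) : ℕ) : ℝ) < (π * (2*(m:ℝ)+17)/17)^m := by
  have hmR : (1:ℝ) ≤ (m:ℝ) := by exact_mod_cast hm
  have hm0 : (0:ℝ) ≤ (m:ℝ) := by linarith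
  have hB : (0:ℝ) < π * (2*(m:ℝ)+17)/17 := by positivity
  have hfac : (0:ℝ) < ((Nat.factorial (m+1) : ℕ) : ℝ) := by
    exact_mod_cast Nat.factorial_pos (m+1)
  rw [← Real.log_lt_log_iff hfac (by positivity)]
  rw [Real.log_pow]
  have h1 := log_factorial_le (m+1) (by omega)
  push_cast at h1
  have hsplit : Real.log (π * (2*(m:ℝ)+17)/17)
      = Real.log (2*π/17) + Real.log ((m:ℝ)+8.5) := by
    rw [show π * (2*(m:ℝ)+17)/17 = (2*π/17) * ((m:ℝ)+8.5) by ring]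
    rw [Real.log_mul (by positivity) (by positivity)]
  rw [hsplit]
  have hc := c0_le
  have hF := Fkey (m:ℝ) hmR
  have hratio : 15/(2*(m:ℝ)+9.5) ≤ Real.log ((m:ℝ)+8.5) - Real.log ((m:ℝ)+1) := by
    have h := log_ratio (a := (m:ℝ)+1) (b := (m:ℝ)+8.5) (by linarith) (by linarith)
    have heq : 2 * (((m:ℝ)+8.5) - ((m:ℝ)+1)) / (((m:ℝ)+1) + ((m:ℝ)+8.5))
        = 15/(2*(m:ℝ)+9.5) := by
      rw [div_eq_div_iff (by linarith) (by linarith)]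
      ring
    linarith [heq ▸ h]
  have e1 := mul_le_mul_of_nonneg_left
    (by linarith : (0.004663 - 1 : ℝ) ≤ Real.log (2*π/17)) hm0
  have e2 := mul_le_mul_of_nonneg_left hratio hm0
  have e3 : (m:ℝ) * (15/(2*(m:ℝ)+9.5)) = 15*(m:ℝ)/(2*(m:ℝ)+9.5) := by ring
  nlinarith [hF, h1, e1, e2, e3]

/-- Odd case: factorial inequality. -/
private lemma odd_case (k : ℕ) :
    ((Nat.factorial (k+1) : ℕ) : ℝ) * ((Nat.factorial (k+2) : ℕ) : ℝ)
      < (π * (2*(k:ℝ)+18)/17)^(2*k+1) := by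
  rcases Nat.eq_zero_or_pos k with rfl | hk
  · norm_num [Nat.factorial]
    nlinarith [Real.pi_gt_three]
  have hkR : (1:ℝ) ≤ (k:ℝ) := by exact_mod_cast hk
  have hk0 : (0:ℝ) ≤ (k:ℝ) := by linarith
  have hB : (0:ℝ) < π * (2*(k:ℝ)+18)/17 := by positivity
  have hf1 : (0:ℝ) < ((Nat.factorial (k+1) : ℕ) : ℝ) := by
    exact_mod_cast Nat.factorial_pos (k+1)
  have hf2 : (0:ℝ) < ((Nat.factorial (k+2) : ℕ) : ℝ) := by
    exact_mod_cast Nat.factorial_pos (k+2)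
  rw [← Real.log_lt_log_iff (by positivity) (by positivity)]
  rw [Real.log_pow, Real.log_mul hf1.ne' hf2.ne']
  have h1 := log_factorial_le (k+1) (by omega)
  have h2 := log_factorial_le (k+2) (by omega)
  push_cast at h1 h2
  have hsplit : Real.log (π * (2*(k:ℝ)+18)/17)
      = Real.log (2*π/17) + Real.log ((k:ℝ)+9) := by
    rw [show π * (2*(k:ℝ)+18)/17 = (2*π/17) * ((k:ℝ)+9) by ring]
    rw [Real.log_mul (by positivity) (by positivity)]
  rw [hsplit]
  have hc := c0_le
  have hG := Gkey (k:ℝ) hkR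
  have hr1 : 16/(2*(k:ℝ)+10) ≤ Real.log ((k:ℝ)+9) - Real.log ((k:ℝ)+1) := by
    have h := log_ratio (a := (k:ℝ)+1) (b := (k:ℝ)+9) (by linarith) (by linarith)
    have heq : 2 * (((k:ℝ)+9) - ((k:ℝ)+1)) / (((k:ℝ)+1) + ((k:ℝ)+9))
        = 16/(2*(k:ℝ)+10) := by
      rw [div_eq_div_iff (by linarith) (by linarith)]
      ring
    linarith [heq ▸ h]
  have hr2 : 14/(2*(k:ℝ)+11) ≤ Real.log ((k:ℝ)+9) - Real.log ((k:ℝ)+2) := by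
    have h := log_ratio (a := (k:ℝ)+2) (b := (k:ℝ)+9) (by linarith) (by linarith)
    have heq : 2 * (((k:ℝ)+9) - ((k:ℝ)+2)) / (((k:ℝ)+2) + ((k:ℝ)+9))
        = 14/(2*(k:ℝ)+11) := by
      rw [div_eq_div_iff (by linarith) (by linarith)]
      ring
    linarith [heq ▸ h]
  have e1 := mul_le_mul_of_nonneg_left hr1 (by linarith : (0:ℝ) ≤ (k:ℝ)+3/2)
  have e2 := mul_le_mul_of_nonneg_left hr2 (by linarith : (0:ℝ) ≤ (k:ℝ)+5/2)
  have ec := mul_le_mul_of_nonneg_left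
    (by linarith : (0.004663 - 1 : ℝ) ≤ Real.log (2*π/17))
    (by linarith : (0:ℝ) ≤ 2*(k:ℝ)+1)
  have e3 : ((k:ℝ)+3/2) * (16/(2*(k:ℝ)+10)) = (8*(k:ℝ)+12)/((k:ℝ)+5) := by
    have h10 : (2*(k:ℝ)+10) ≠ 0 := by positivity
    have h5 : ((k:ℝ)+5) ≠ 0 := by positivity
    field_simp
    ring
  have e4 : ((k:ℝ)+5/2) * (14/(2*(k:ℝ)+11)) = (14*(k:ℝ)+35)/(2*(k:ℝ)+11) := by
    have h11' : (2*(k:ℝ)+11) ≠ 0 := by positivity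
    field_simp
    ring
  have hcast : ((2*k+1 : ℕ) : ℝ) = 2*(k:ℝ)+1 := by push_cast; ring
  rw [hcast]
  nlinarith [hG, h1, h2, e1, e2, ec, e3, e4]

theorem gamma_lt_pow (n : ℕ) (hn : 1 ≤ n) :
    Real.Gamma (2 + (n : ℝ) / 2) < (π * ((n : ℝ) + 17) / 17) ^ ((n : ℝ) / 2) := by
  rcases Nat.even_or_odd n with ⟨m, hm⟩ | ⟨k, hk⟩
  · -- even case : n = m + m
    subst hm
    have hm1 : 1 ≤ m := by omega
    have harg : 2 + ((m + m : ℕ) : ℝ) / 2 = ((m+1 : ℕ) : ℝ) + 1 := by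
      push_cast; ring
    rw [harg, Real.Gamma_nat_eq_factorial]
    have hexp : (((m + m : ℕ) : ℝ)) / 2 = ((m : ℕ) : ℝ) := by push_cast; ring
    rw [hexp, Real.rpow_natCast]
    have hbase : π * (((m + m : ℕ) : ℝ) + 17) / 17 = π * (2*(m:ℝ)+17)/17 := by
      push_cast; ring
    rw [hbase]
    exact even_case m hm1
  · -- odd case : n = 2k+1
    subst hk
    have hpos : (0:ℝ) < 2 + ((2*k+1 : ℕ) : ℝ) / 2 := by positivity
    have hΓ : 0 < Real.Gamma (2 + ((2*k+1 : ℕ) : ℝ) / 2) := Real.Gamma_pos_of_pos hpos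
    have hB : (0:ℝ) < π * (((2*k+1 : ℕ) : ℝ) + 17) / 17 := by positivity
    have hR : 0 < (π * (((2*k+1 : ℕ) : ℝ) + 17) / 17) ^ (((2*k+1 : ℕ) : ℝ) / 2) :=
      Real.rpow_pos_of_pos hB _
    -- log-convexity of Gamma
    have hsq : (Real.Gamma (2 + ((2*k+1 : ℕ) : ℝ) / 2))^2
        ≤ ((Nat.factorial (k+1) : ℕ) : ℝ) * ((Nat.factorial (k+2) : ℕ) : ℝ) := by
      have hconv := Real.convexOn_log_Gamma
      have hmem1 : ((k:ℝ)+2) ∈ Set.Ioi (0:ℝ) := Set.mem_Ioi.2 (by positivity)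
      have hmem2 : ((k:ℝ)+3) ∈ Set.Ioi (0:ℝ) := Set.mem_Ioi.2 (by positivity)
      have hcvx := hconv.2 hmem1 hmem2 (by norm_num : (0:ℝ) ≤ 1/2)
        (by norm_num : (0:ℝ) ≤ 1/2) (by norm_num)
      simp only [smul_eq_mul, Function.comp_apply] at hcvx
      have hmid : (1/2:ℝ) * ((k:ℝ)+2) + (1/2:ℝ) * ((k:ℝ)+3)
          = 2 + ((2*k+1 : ℕ) : ℝ) / 2 := by push_cast; ring
      rw [hmid] at hcvx
      have hg1 : Real.Gamma ((k:ℝ)+2) = ((Nat.factorial (k+1) : ℕ) : ℝ) := by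
        have := Real.Gamma_nat_eq_factorial (k+1)
        rw [show ((k:ℝ)+2) = ((k+1 : ℕ) : ℝ) + 1 by push_cast; ring]
        exact this
      have hg2 : Real.Gamma ((k:ℝ)+3) = ((Nat.factorial (k+2) : ℕ) : ℝ) := by
        have := Real.Gamma_nat_eq_factorial (k+2)
        rw [show ((k:ℝ)+3) = ((k+2 : ℕ) : ℝ) + 1 by push_cast; ring]
        exact this
      rw [hg1, hg2] at hcvx
      have hf1 : (0:ℝ) < ((Nat.factorial (k+1) : ℕ) : ℝ) := by
        exact_mod_cast Nat.factorial_pos (k+1)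
      have hf2 : (0:ℝ) < ((Nat.factorial (k+2) : ℕ) : ℝ) := by
        exact_mod_cast Nat.factorial_pos (k+2)
      rw [← Real.log_le_log_iff (by positivity) (by positivity)]
      rw [Real.log_pow, Real.log_mul hf1.ne' hf2.ne']
      push_cast at hcvx ⊢
      linarith [hcvx]
    have hfact := odd_case k
    have hR2 : ((π * (((2*k+1 : ℕ) : ℝ) + 17) / 17) ^ (((2*k+1 : ℕ) : ℝ) / 2))^2
        = (π * (2*(k:ℝ)+18)/17)^(2*k+1) := by
      rw [show ((π * (((2*k+1 : ℕ) : ℝ) + 17) / 17) ^ (((2*k+1 : ℕ) : ℝ) / 2))^2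
          = ((π * (((2*k+1 : ℕ) : ℝ) + 17) / 17) ^ (((2*k+1 : ℕ) : ℝ) / 2))^(2:ℕ) by norm_num]
      rw [← Real.rpow_natCast ((π * (((2*k+1 : ℕ) : ℝ) + 17) / 17) ^ (((2*k+1 : ℕ) : ℝ) / 2)) 2]
      rw [← Real.rpow_mul hB.le]
      rw [show (((2*k+1 : ℕ) : ℝ) / 2) * ((2:ℕ):ℝ) = ((2*k+1 : ℕ) : ℝ) by push_cast; ring]
      rw [Real.rpow_natCast]
      congr 1
      push_cast; ring
    have hlt2 : (Real.Gamma (2 + ((2*k+1 : ℕ) : ℝ) / 2))^2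
        < ((π * (((2*k+1 : ℕ) : ℝ) + 17) / 17) ^ (((2*k+1 : ℕ) : ℝ) / 2))^2 := by
      rw [hR2]
      exact lt_of_le_of_lt hsq hfact
    exact lt_of_pow_lt_pow_left₀ 2 hR.le hlt2
end

section
/- The function φ(t) = ((π/8.5)(t + 8.5))^t / Γ(t + 2) is monotonically increasing on [310, ∞); that is, for all real numbers s, t with 310 ≤ s ≤ t, ((π/8.5)(s + 8.5))^s / Γ(s + 2) ≤ ((π/8.5)(t + 8.5))^t / Γ(t + 2). -/
open Real

-- L1 : log w ≤ (w - w⁻¹)/2 for w ≥ 1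
lemma log_le_half_sub_inv {w : ℝ} (hw : 1 ≤ w) : Real.log w ≤ (w - w⁻¹) / 2 := by
  have h0 : (0:ℝ) < 1 := one_pos
  set f : ℝ → ℝ := fun x => (x - x⁻¹) / 2 - Real.log x with hf
  have key : ∀ x ∈ Set.Ici (1:ℝ), HasDerivAt f ((1 + x⁻¹^2)/2 - x⁻¹) x := by
    intro x hx
    simp only [Set.mem_Ici] at hx
    have hx0 : x ≠ 0 := by positivity
    have h1 : HasDerivAt (fun x : ℝ => (x - x⁻¹)/2) ((1 - -(x^2)⁻¹)/2) x :=
      ((hasDerivAt_id x).sub (hasDerivAt_inv hx0)).div_const 2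
    have h2 : HasDerivAt Real.log x⁻¹ x := Real.hasDerivAt_log hx0
    refine (h1.fun_sub h2).congr_deriv ?_
    ring
  have mono : MonotoneOn f (Set.Ici (1:ℝ)) := by
    apply monotoneOn_of_deriv_nonneg (convex_Ici 1)
    · exact fun x hx => ((key x hx).differentiableAt).continuousAt.continuousWithinAt
    · intro x hx
      rw [interior_Ici] at hx
      exact ((key x (Set.mem_Ici.mpr (le_of_lt hx))).differentiableAt).differentiableWithinAt
    · intro x hx
      rw [interior_Ici] at hx
      rw [(key x (Set.mem_Ici.mpr (le_of_lt hx))).deriv]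
      have hx1 : (1:ℝ) ≤ x := le_of_lt hx
      have hx0 : (0:ℝ) < x := lt_of_lt_of_le one_pos hx1
      have : (1 + x⁻¹^2)/2 - x⁻¹ = (x - 1)^2 / (2 * x^2) := by field_simp; ring
      rw [this]; positivity
  have h1 : f 1 ≤ f w := mono (by simp) hw hw
  have : f 1 = 0 := by simp [hf]
  rw [this] at h1
  simpa [hf] using h1

-- L2 : 2(w-1)/(w+1) ≤ log w for w ≥ 1
lemma pade_le_log {w : ℝ} (hw : 1 ≤ w) : 2 * (w - 1) / (w + 1) ≤ Real.log w := by
  set f : ℝ → ℝ := fun x => Real.log x - 2 * (x - 1) / (x + 1) with hf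
  have key : ∀ x ∈ Set.Ici (1:ℝ), HasDerivAt f (x⁻¹ - 4 / (x+1)^2) x := by
    intro x hx
    simp only [Set.mem_Ici] at hx
    have hx0 : x ≠ 0 := by positivity
    have hx1 : x + 1 ≠ 0 := by positivity
    have h2 : HasDerivAt (fun x : ℝ => 2 * (x - 1) / (x + 1))
        ((2 * 1 * (x+1) - 2*(x-1)*1) / (x+1)^2) x := by
      simpa using (((hasDerivAt_id x).sub_const 1).const_mul 2).fun_div ((hasDerivAt_id x).add_const 1) hx1
    have h1 : HasDerivAt Real.log x⁻¹ x := Real.hasDerivAt_log hx0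
    have h2' : HasDerivAt (fun x : ℝ => 2 * (x - 1) / (x + 1)) (4 / (x+1)^2) x := by
      convert h2 using 1; ring
    exact h1.sub h2'
  have mono : MonotoneOn f (Set.Ici (1:ℝ)) := by
    apply monotoneOn_of_deriv_nonneg (convex_Ici 1)
    · exact fun x hx => ((key x hx).differentiableAt).continuousAt.continuousWithinAt
    · intro x hx
      rw [interior_Ici] at hx
      exact ((key x (Set.mem_Ici.mpr (le_of_lt hx))).differentiableAt).differentiableWithinAt
    · intro x hx
      rw [interior_Ici] at hx
      rw [(key x (Set.mem_Ici.mpr (le_of_lt hx))).deriv]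
      have hx1 : (1:ℝ) ≤ x := le_of_lt hx
      have hx0 : (0:ℝ) < x := lt_of_lt_of_le one_pos hx1
      have : x⁻¹ - 4/(x+1)^2 = (x - 1)^2 / (x * (x+1)^2) := by field_simp; ring
      rw [this]; positivity
  have h1 : f 1 ≤ f w := mono (by simp) hw hw
  have : f 1 = 0 := by simp [hf]
  rw [this] at h1
  simpa [hf, sub_nonneg] using h1

-- trapezoid rule inequality for 1/x
lemma log_trapezoid {a : ℝ} (ha : 0 < a) :
    Real.log (a+1) - Real.log a ≤ 1/(2*a) + 1/(2*(a+1)) := by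
  have ha1 : (0:ℝ) < a + 1 := by linarith
  set r := Real.sqrt (a*(a+1)) with hrdef
  have hr2 : r^2 = a*(a+1) := Real.sq_sqrt (by positivity)
  have hr0 : 0 < r := Real.sqrt_pos.mpr (by positivity)
  -- r ≤ a+1
  have hrle : r ≤ a + 1 := by
    nlinarith [sq_nonneg (r - (a+1))]
  have hw1 : 1 ≤ (a+1)/r := (le_div_iff₀ hr0).mpr (by linarith)
  have hL1 := log_le_half_sub_inv hw1
  have hlogr : Real.log r = (Real.log a + Real.log (a+1))/2 := by
    rw [hrdef, Real.log_sqrt (by positivity), Real.log_mul (ne_of_gt ha) (ne_of_gt ha1)]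
  have hlogw : Real.log ((a+1)/r) = Real.log (a+1) - Real.log r :=
    Real.log_div (ne_of_gt ha1) (ne_of_gt hr0)
  have hwinv : ((a+1)/r) - ((a+1)/r)⁻¹ = 1/r := by
    rw [inv_div]
    field_simp
    nlinarith [hr2]
  rw [hlogw, hlogr, hwinv] at hL1
  -- hL1 : log(a+1) - (log a + log(a+1))/2 ≤ (1/r)/2
  -- so log(a+1) - log a ≤ 1/r
  have hstep : Real.log (a+1) - Real.log a ≤ 1/r := by linarith
  -- 1/r ≤ 1/(2a) + 1/(2(a+1))  ⟺  2a(a+1) ≤ r(2a+1)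
  have hrlow : 2*a*(a+1) ≤ r*(2*a+1) := by
    have hP : (r*(2*a+1))^2 - (2*a*(a+1))^2 = a*(a+1) := by
      have : (r*(2*a+1))^2 = a*(a+1)*(2*a+1)^2 := by rw [mul_pow, hr2]
      rw [this]; ring
    nlinarith [mul_pos (mul_pos hr0 (by linarith : (0:ℝ) < 2*a+1)) (by positivity : (0:ℝ) < 2*a*(a+1))]
  have h2 : 1/r ≤ 1/(2*a) + 1/(2*(a+1)) := by
    rw [div_add_div _ _ (by positivity) (by positivity), div_le_div_iff₀ hr0 (by positivity)]
    nlinarith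
  linarith

-- lower bound for harmonic-type sums
lemma sum_inv_lower (x : ℝ) (hx : 0 < x) (n : ℕ) :
    1/(2*x) + (Real.log (x+n) - Real.log x) + 1/(2*(x+n)) ≤
      ∑ j ∈ Finset.range (n+1), 1/(x+j) := by
  induction n with
  | zero => simp; ring_nf; linarith
  | succ n ih =>
    rw [Finset.sum_range_succ]
    have hxn : 0 < x + n := by positivity
    have htrap := log_trapezoid hxn
    have hcast : ((n+1 : ℕ) : ℝ) = (n : ℝ) + 1 := by push_cast; ring
    rw [hcast]
    have h1 : x + ((n:ℝ)+1) = (x + n) + 1 := by ring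
    rw [h1]
    have hsplit : 1/(x+(n:ℝ)+1) = 1/(2*(x+(n:ℝ)+1)) + 1/(2*(x+(n:ℝ)+1)) := by
      have h2 : (x+(n:ℝ)+1) ≠ 0 := by positivity
      field_simp
      ring
    linarith

lemma log_pi_div_bound : -(0.99545 : ℝ) ≤ Real.log (π/8.5) := by
  have hpos : (0:ℝ) < π/8.5 := by positivity
  rw [Real.le_log_iff_exp_le hpos]
  have h1 : Real.exp (-(0.99545:ℝ)) = Real.exp 0.00455 * (Real.exp 1)⁻¹ := by
    rw [← Real.exp_neg, ← Real.exp_add]; norm_num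
  have h2 : Real.exp (0.00455:ℝ) ≤ 1/0.99545 := by
    have h := Real.add_one_le_exp (-(0.00455:ℝ))
    rw [Real.exp_neg] at h
    have h5 : (0:ℝ) < Real.exp 0.00455 := Real.exp_pos _
    rw [le_div_iff₀ (by norm_num : (0:ℝ) < 0.99545)]
    have hc : Real.exp 0.00455 * (Real.exp 0.00455)⁻¹ = 1 := mul_inv_cancel₀ (ne_of_gt h5)
    nlinarith
  have h6 : (Real.exp 1)⁻¹ ≤ 1/2.7182818283 := by
    rw [one_div]
    exact inv_anti₀ (by norm_num) (le_of_lt Real.exp_one_gt_d9)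
  have h7 : Real.exp (-(0.99545:ℝ)) ≤ (1/0.99545) * (1/2.7182818283) := by
    rw [h1]
    exact mul_le_mul h2 h6 (by positivity) (by positivity)
  calc Real.exp (-(0.99545:ℝ)) ≤ (1/0.99545) * (1/2.7182818283) := h7
    _ ≤ 3.141592/8.5 := by norm_num
    _ ≤ π/8.5 := by
        gcongr
        exact Real.pi_gt_d6.le

lemma rat_ineq {u : ℝ} (hu : 310 ≤ u) :
    0 ≤ -(0.99545:ℝ) + 13/(2*u+10.5) + u/(u+8.5) + 1/(2*(u+2)) := by
  have hA : (0:ℝ) < 2*u+10.5 := by linarith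
  have hB : (0:ℝ) < u+8.5 := by linarith
  have hC : (0:ℝ) < 2*(u+2) := by linarith
  have hv : (0:ℝ) ≤ u - 310 := by linarith
  have key : 0 ≤ -(0.99545:ℝ)*((2*u+10.5)*((u+8.5)*(2*(u+2)))) + 13*((u+8.5)*(2*(u+2)))
      + u*((2*u+10.5)*(2*(u+2))) + (2*u+10.5)*(u+8.5) := by
    nlinarith [hv, sq_nonneg (u-310), mul_nonneg hv (sq_nonneg (u-310))]
  have heq : -(0.99545:ℝ) + 13/(2*u+10.5) + u/(u+8.5) + 1/(2*(u+2))
      = (-(0.99545:ℝ)*((2*u+10.5)*((u+8.5)*(2*(u+2)))) + 13*((u+8.5)*(2*(u+2)))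
      + u*((2*u+10.5)*(2*(u+2))) + (2*u+10.5)*(u+8.5)) / ((2*u+10.5)*((u+8.5)*(2*(u+2)))) := by
    field_simp
  rw [heq]
  exact div_nonneg key (by positivity)

lemma V_mono (n : ℕ) (hn : 1 ≤ n) (s t : ℝ) (hs : 310 ≤ s) (hst : s ≤ t) :
    s * Real.log (π/8.5*(s+8.5)) - s * Real.log n
        + ∑ j ∈ Finset.range (n+1), Real.log (s+2+j)
      ≤ t * Real.log (π/8.5*(t+8.5)) - t * Real.log n
        + ∑ j ∈ Finset.range (n+1), Real.log (t+2+j) := by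
  have hc : (0:ℝ) < π/8.5 := by positivity
  set c : ℝ := π/8.5 with hcdef
  set f : ℝ → ℝ := fun u => u * Real.log (c*(u+8.5)) - u * Real.log n
      + ∑ j ∈ Finset.range (n+1), Real.log (u+2+j) with hfdef
  set f' : ℝ → ℝ := fun u => (1 * Real.log (c*(u+8.5)) + u * ((c*(u+8.5))⁻¹ * c))
      - 1 * Real.log n + ∑ j ∈ Finset.range (n+1), ((u+2+(j:ℝ))⁻¹ * 1) with hf'def
  have key : ∀ u ∈ Set.Ici (310:ℝ), HasDerivAt f (f' u) u := by
    intro u hu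
    simp only [Set.mem_Ici] at hu
    have hu8 : (0:ℝ) < u + 8.5 := by linarith
    have hne : c*(u+8.5) ≠ 0 := by positivity
    have h_inner : HasDerivAt (fun u : ℝ => c*(u+8.5)) c u := by
      simpa using ((hasDerivAt_id u).add_const (8.5:ℝ)).const_mul c
    have h_log : HasDerivAt (fun u : ℝ => Real.log (c*(u+8.5))) ((c*(u+8.5))⁻¹ * c) u :=
      (Real.hasDerivAt_log hne).comp (h := fun u : ℝ => c*(u+8.5)) u h_inner
    have h_first : HasDerivAt (fun u : ℝ => u * Real.log (c*(u+8.5)))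
        (1 * Real.log (c*(u+8.5)) + u * ((c*(u+8.5))⁻¹ * c)) u :=
      (hasDerivAt_id u).mul h_log
    have h_second : HasDerivAt (fun u : ℝ => u * Real.log n) (1 * Real.log n) u :=
      (hasDerivAt_id u).mul_const _
    have h_sum : HasDerivAt (fun u : ℝ => ∑ j ∈ Finset.range (n+1), Real.log (u+2+j))
        (∑ j ∈ Finset.range (n+1), ((u+2+(j:ℝ))⁻¹ * 1)) u := by
      apply HasDerivAt.fun_sum
      intro j hj
      have hj0 : (0:ℝ) < u + 2 + j := by positivity
      exact (Real.hasDerivAt_log (ne_of_gt hj0)).comp u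
        (((hasDerivAt_id u).add_const (2:ℝ)).add_const (j:ℝ))
    exact (h_first.sub h_second).add h_sum
  have hderiv_nonneg : ∀ u ∈ Set.Ici (310:ℝ), 0 ≤ f' u := by
    intro u hu
    simp only [Set.mem_Ici] at hu
    have hu8 : (0:ℝ) < u + 8.5 := by linarith
    have hu2 : (0:ℝ) < u + 2 := by linarith
    -- sum lower bound
    have hsum := sum_inv_lower (u+2) hu2 n
    have hsum' : 1/(2*(u+2)) + (Real.log (u+2+n) - Real.log (u+2))
        ≤ ∑ j ∈ Finset.range (n+1), ((u+2+(j:ℝ))⁻¹ * 1) := by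
      have hpos : (0:ℝ) < 2*(u+2+(n:ℝ)) := by positivity
      calc 1/(2*(u+2)) + (Real.log (u+2+n) - Real.log (u+2))
          ≤ 1/(2*(u+2)) + (Real.log (u+2+n) - Real.log (u+2)) + 1/(2*(u+2+(n:ℝ))) := by
            have : (0:ℝ) < 1/(2*(u+2+(n:ℝ))) := by positivity
            linarith
        _ ≤ ∑ j ∈ Finset.range (n+1), 1/(u+2+(j:ℝ)) := hsum
        _ = ∑ j ∈ Finset.range (n+1), ((u+2+(j:ℝ))⁻¹ * 1) := by
            apply Finset.sum_congr rfl; intro j hj; rw [one_div, mul_one]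
    -- log n ≤ log (u+2+n)
    have hn1 : (1:ℝ) ≤ (n:ℝ) := by exact_mod_cast hn
    have hlogn : Real.log n ≤ Real.log (u+2+n) := by
      apply Real.log_le_log (by linarith)
      linarith
    -- log (c*(u+8.5)) = log c + log (u+8.5)
    have hsplit : Real.log (c*(u+8.5)) = Real.log c + Real.log (u+8.5) :=
      Real.log_mul (ne_of_gt hc) (ne_of_gt hu8)
    -- log (u+8.5) - log (u+2) ≥ 13/(2u+10.5)
    have hw1 : (1:ℝ) ≤ (u+8.5)/(u+2) := by
      rw [le_div_iff₀ hu2]; linarith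
    have hpade := pade_le_log hw1
    have hwlog : Real.log ((u+8.5)/(u+2)) = Real.log (u+8.5) - Real.log (u+2) :=
      Real.log_div (ne_of_gt hu8) (ne_of_gt hu2)
    have hwval : 2 * ((u+8.5)/(u+2) - 1) / ((u+8.5)/(u+2) + 1) = 13/(2*u+10.5) := by
      have d1 : (u+8.5)/(u+2) + 1 ≠ 0 := by positivity
      have d2 : (2*u+10.5 : ℝ) ≠ 0 := by intro h; nlinarith
      rw [div_eq_div_iff d1 d2]
      field_simp
      ring
    rw [hwlog, hwval] at hpade
    -- u * ((c*(u+8.5))⁻¹ * c) = u/(u+8.5)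
    have huterm : u * ((c*(u+8.5))⁻¹ * c) = u/(u+8.5) := by
      rw [mul_inv, mul_comm (c⁻¹) ((u+8.5)⁻¹), mul_assoc, inv_mul_cancel₀ (ne_of_gt hc),
        mul_one, div_eq_mul_inv]
    have hlogc : -(0.99545:ℝ) ≤ Real.log c := log_pi_div_bound
    have hrat := rat_ineq (le_trans (le_refl 310) hu)
    show (0:ℝ) ≤ (1 * Real.log (c*(u+8.5)) + u * ((c*(u+8.5))⁻¹ * c))
      - 1 * Real.log n + ∑ j ∈ Finset.range (n+1), ((u+2+(j:ℝ))⁻¹ * 1)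
    rw [huterm, hsplit]
    linarith
  have hmono : MonotoneOn f (Set.Ici (310:ℝ)) := by
    apply monotoneOn_of_deriv_nonneg (convex_Ici 310)
    · exact fun x hx => ((key x hx).differentiableAt).continuousAt.continuousWithinAt
    · intro x hx
      rw [interior_Ici] at hx
      exact ((key x (Set.mem_Ici.mpr (le_of_lt hx))).differentiableAt).differentiableWithinAt
    · intro x hx
      rw [interior_Ici] at hx
      rw [(key x (Set.mem_Ici.mpr (le_of_lt hx))).deriv]
      exact hderiv_nonneg x (Set.mem_Ici.mpr (le_of_lt hx))
  exact hmono hs (le_trans hs hst) hst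

theorem phi_monotone (s t : ℝ) (hs : 310 ≤ s) (hst : s ≤ t) :
    ((π / 8.5) * (s + 8.5)) ^ s / Real.Gamma (s + 2) ≤
      ((π / 8.5) * (t + 8.5)) ^ t / Real.Gamma (t + 2) := by
  have ht : (310:ℝ) ≤ t := le_trans hs hst
  have hs2 : (0:ℝ) < s + 2 := by linarith
  have ht2 : (0:ℝ) < t + 2 := by linarith
  have hs85 : (0:ℝ) < s + 8.5 := by linarith
  have ht85 : (0:ℝ) < t + 8.5 := by linarith
  have hc : (0:ℝ) < π/8.5 := by positivity
  have hGs : 0 < Real.Gamma (s+2) := Real.Gamma_pos_of_pos hs2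
  have hGt : 0 < Real.Gamma (t+2) := Real.Gamma_pos_of_pos ht2
  have hCs : (0:ℝ) < ((π / 8.5) * (s + 8.5)) ^ s := Real.rpow_pos_of_pos (by positivity) s
  have hCt : (0:ℝ) < ((π / 8.5) * (t + 8.5)) ^ t := Real.rpow_pos_of_pos (by positivity) t
  rw [div_le_div_iff₀ hGs hGt]
  -- goal : Cs * Γ(t+2) ≤ Ct * Γ(s+2)
  have hP : ∀ n : ℕ, 1 ≤ n →
      ((π / 8.5) * (s + 8.5)) ^ s * Real.GammaSeq (t+2) n ≤
      ((π / 8.5) * (t + 8.5)) ^ t * Real.GammaSeq (s+2) n := by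
    intro n hn
    have hn0 : (0:ℝ) < (n:ℝ) := by exact_mod_cast hn
    have hfac : ((Nat.factorial n : ℕ) : ℝ) ≠ 0 := by
      exact_mod_cast Nat.factorial_ne_zero n
    have prodpos : ∀ x : ℝ, 0 < x → (0:ℝ) < ∏ j ∈ Finset.range (n+1), (x+j) := by
      intro x hx
      apply Finset.prod_pos
      intro j hj
      positivity
    have hGSpos : ∀ x : ℝ, 0 < x → 0 < Real.GammaSeq x n := by
      intro x hx
      rw [Real.GammaSeq]
      apply div_pos
      · apply mul_pos (Real.rpow_pos_of_pos hn0 x)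
        exact_mod_cast Nat.factorial_pos n
      · exact prodpos x hx
    have logGS : ∀ x : ℝ, 0 < x → Real.log (Real.GammaSeq x n) =
        x * Real.log n + Real.log (Nat.factorial n) - ∑ j ∈ Finset.range (n+1), Real.log (x+j) := by
      intro x hx
      rw [Real.GammaSeq, Real.log_div (by positivity) (ne_of_gt (prodpos x hx)),
        Real.log_mul (ne_of_gt (Real.rpow_pos_of_pos hn0 x)) hfac,
        Real.log_rpow hn0,
        Real.log_prod (fun j hj => by positivity)]
    rw [← Real.log_le_log_iff (mul_pos hCs (hGSpos _ ht2)) (mul_pos hCt (hGSpos _ hs2)),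
      Real.log_mul (ne_of_gt hCs) (ne_of_gt (hGSpos _ ht2)),
      Real.log_mul (ne_of_gt hCt) (ne_of_gt (hGSpos _ hs2)),
      logGS _ ht2, logGS _ hs2,
      Real.log_rpow (by positivity : (0:ℝ) < (π/8.5)*(s+8.5)),
      Real.log_rpow (by positivity : (0:ℝ) < (π/8.5)*(t+8.5))]
    have hV := V_mono n hn s t hs hst
    have e1 : (t+2) * Real.log n = t * Real.log n + 2 * Real.log n := by ring
    have e2 : (s+2) * Real.log n = s * Real.log n + 2 * Real.log n := by ring
    rw [e1, e2]
    linarith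
  have hlim1 : Filter.Tendsto (fun n : ℕ => ((π / 8.5) * (s + 8.5)) ^ s * Real.GammaSeq (t+2) n)
      Filter.atTop (nhds (((π / 8.5) * (s + 8.5)) ^ s * Real.Gamma (t+2))) :=
    (Real.GammaSeq_tendsto_Gamma (t+2)).const_mul _
  have hlim2 : Filter.Tendsto (fun n : ℕ => ((π / 8.5) * (t + 8.5)) ^ t * Real.GammaSeq (s+2) n)
      Filter.atTop (nhds (((π / 8.5) * (t + 8.5)) ^ t * Real.Gamma (s+2))) :=
    (Real.GammaSeq_tendsto_Gamma (s+2)).const_mul _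
  exact le_of_tendsto_of_tendsto hlim1 hlim2
    (Filter.eventually_atTop.mpr ⟨1, fun n hn => hP n hn⟩)
end

section
/- Let γ denote the Euler–Mascheroni constant and define ρ(t) = ln(t + 8.5) − 8.5/(t + 8.5) − ln(t + e^{1−γ}) + ln(πe/8.5). Then for every real number t ≥ 310, ρ(t) > 0.0000796. -/
open Real

lemma pade_log {x : ℝ} (hx : 1 ≤ x) : 2*(x-1)/(x+1) ≤ Real.log x := by
  have hder : ∀ y : ℝ, (1:ℝ) ≤ y →
      HasDerivAt (fun z : ℝ => Real.log z - 2*(z-1)/(z+1)) (1/y - 4/(y+1)^2) y := by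
    intro y hy
    have hy0 : y ≠ 0 := by linarith
    have hy1 : y + 1 ≠ 0 := by linarith
    have h1 : HasDerivAt (fun z : ℝ => 2*(z-1)) 2 y := by
      simpa using ((hasDerivAt_id y).sub_const 1).const_mul (2:ℝ)
    have h2 : HasDerivAt (fun z : ℝ => z + 1) 1 y := (hasDerivAt_id y).add_const 1
    have h3 := (h1.div h2 hy1)
    have h4 := (Real.hasDerivAt_log hy0).sub h3
    have heq : 1/y - 4/(y+1)^2 = y⁻¹ - (2*(y+1) - 2*(y-1)*1)/(y+1)^2 := by
      rw [one_div]
      congr 1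
      ring
    rw [heq]
    exact h4
  have hmono : MonotoneOn (fun z : ℝ => Real.log z - 2*(z-1)/(z+1)) (Set.Ici 1) := by
    apply monotoneOn_of_deriv_nonneg (convex_Ici 1)
    · exact fun y hy => ((hder y hy).continuousAt).continuousWithinAt
    · intro y hy
      rw [interior_Ici] at hy
      exact ((hder y hy.le).differentiableAt).differentiableWithinAt
    · intro y hy
      rw [interior_Ici] at hy
      rw [(hder y hy.le).deriv]
      have hy0 : (0:ℝ) < y := by linarith [hy.out]
      have hsq : (0:ℝ) < (y+1)^2 := by positivity
      rw [sub_nonneg, div_le_div_iff₀ hsq hy0]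
      nlinarith [sq_nonneg (y-1)]
  have h := hmono (Set.self_mem_Ici) (Set.mem_Ici.mpr hx) hx
  simp only [Real.log_one] at h
  norm_num at h
  linarith

set_option maxRecDepth 8000 in
lemma harmonic_255_lb : (61203/10000 : ℚ) < harmonic 255 := by
  norm_num [harmonic_succ, harmonic_zero]

lemma gamma_lb : (0.5751 : ℝ) < Real.eulerMascheroniConstant := by
  have h := Real.eulerMascheroniSeq_lt_eulerMascheroniConstant 255
  rw [Real.eulerMascheroniSeq] at h
  have hH : (61203/10000 : ℝ) < (harmonic 255 : ℝ) := by
    have h1 : ((61203/10000:ℚ):ℝ) < ((harmonic 255 : ℚ) : ℝ) := by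
      exact_mod_cast harmonic_255_lb
    push_cast at h1
    linarith
  have hlog : Real.log ((255 : ℕ) + 1) = 8 * Real.log 2 := by
    norm_num
    rw [show (256:ℝ) = 2^8 by norm_num, Real.log_pow]
    norm_num
  have h2 : Real.log 2 < 0.6931471808 := Real.log_two_lt_d9
  rw [hlog] at h
  linarith

lemma exp_one_sub_gamma_lt : Real.exp (1 - Real.eulerMascheroniConstant) < 1.531 := by
  have hlogA : (0.4249 : ℝ) ≤ Real.log 1.531 := by
    have hsq : Real.log ((1.531:ℝ)^2) = 2 * Real.log 1.531 := by
      rw [Real.log_pow]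
      norm_num
    have hmul : Real.log ((1.531:ℝ)^2) = Real.log 2 + Real.log 1.1719805 := by
      rw [show ((1.531:ℝ)^2) = 2 * 1.1719805 by norm_num,
        Real.log_mul (by norm_num) (by norm_num)]
    have hp := pade_log (x := 1.1719805) (by norm_num)
    have hpv : (0.158362 : ℝ) ≤ 2*((1.1719805:ℝ)-1)/((1.1719805:ℝ)+1) := by norm_num
    have h2 := Real.log_two_gt_d9
    linarith
  calc Real.exp (1 - Real.eulerMascheroniConstant) < Real.exp 0.4249 := by
        have := gamma_lb
        apply Real.exp_lt_exp.mpr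
        linarith
    _ ≤ 1.531 := by
        rw [show (1.531:ℝ) = Real.exp (Real.log 1.531) from (Real.exp_log (by norm_num)).symm]
        exact Real.exp_le_exp.mpr hlogA

lemma const_lb : (0.0046635 : ℝ) ≤ Real.log (π * Real.exp 1 / 8.5) := by
  have hπ : (3.141592:ℝ) < π := Real.pi_gt_d6
  have he : (2.7182818283:ℝ) < Real.exp 1 := Real.exp_one_gt_d9
  have hx : (1.0046744:ℝ) ≤ π * Real.exp 1 / 8.5 := by
    rw [le_div_iff₀ (by norm_num : (0:ℝ) < 8.5)]
    nlinarith
  have hx1 : (1:ℝ) ≤ π * Real.exp 1 / 8.5 := by linarith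
  have hp := pade_log hx1
  set x := π * Real.exp 1 / 8.5 with hxdef
  have hd : (0:ℝ) < x + 1 := by linarith
  have key : (0.0046635:ℝ) ≤ 2*(x-1)/(x+1) := by
    rw [le_div_iff₀ hd]
    nlinarith
  linarith

theorem rho_pos (t : ℝ) (ht : 310 ≤ t) :
    0.0000796 <
      Real.log (t + 8.5) - 8.5 / (t + 8.5)
        - Real.log (t + Real.exp (1 - Real.eulerMascheroniConstant)) + Real.log (π * Real.exp 1 / 8.5) := by
  have ha0 : (0:ℝ) < Real.exp (1 - Real.eulerMascheroniConstant) := Real.exp_pos _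
  have haU := exp_one_sub_gamma_lt
  have h85 : (0:ℝ) < t + 8.5 := by linarith
  have hA : (0:ℝ) < t + 1.531 := by linarith
  have hmono : Real.log (t + Real.exp (1 - Real.eulerMascheroniConstant)) ≤ Real.log (t + 1.531) := by
    apply Real.log_le_log (by linarith)
    linarith
  have hdiv : Real.log (t + 8.5) - Real.log (t + 1.531) = Real.log ((t+8.5)/(t+1.531)) :=
    (Real.log_div (by linarith) (by linarith)).symm
  set x := (t+8.5)/(t+1.531) with hxdef
  have hx1 : (1:ℝ) ≤ x := by
    rw [hxdef, le_div_iff₀ hA]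
    linarith
  have hp := pade_log hx1
  have hval : 2*(x-1)/(x+1) = 13.938/(2*t+10.031) := by
    rw [hxdef]
    have h2 : (0:ℝ) < 2*t+10.031 := by linarith
    field_simp
    ring
  have hd1 : (0:ℝ) < 2*t+10.031 := by linarith
  have hfrac : 13.938/(2*t+10.031) - 8.5/(t+8.5)
      = (-3.062*t + 33.2095)/((2*t+10.031)*(t+8.5)) := by
    field_simp
    ring
  have hkey : (-0.0045839 : ℝ) < (-3.062*t + 33.2095)/((2*t+10.031)*(t+8.5)) := by
    rw [lt_div_iff₀ (by positivity)]
    nlinarith [sq_nonneg (t-310)]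
  have hC := const_lb
  linarith
end

section
/- The function ω(t) = (1/t)·ln((t + 18)/8.5) is convex on the interval [107.5, ∞); equivalently, its second derivative satisfies ω''(t) = (1/(t^3 (t+18)^2)) · ( 2(t+18)^2 ln((t+18)/8.5) − (3t^2 + 36t) ) ≥ 0 for all t ≥ 107.5. -/
open Real

private noncomputable def fω : ℝ → ℝ := fun t => (1 / t) * Real.log ((t + 18) / 8.5)

private noncomputable def gω : ℝ → ℝ :=
  fun t => -(1 / t ^ 2) * Real.log ((t + 18) / 8.5) + (1 / t) * (1 / (t + 18))

private lemma hd1 {t : ℝ} (ht : 0 < t) :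
    HasDerivAt fω (-(1 / t ^ 2) * Real.log ((t + 18) / 8.5) + (1 / t) * (1 / (t + 18))) t := by
  have ht18 : (0:ℝ) < t + 18 := by linarith
  have h1 : HasDerivAt (fun t : ℝ => (t + 18) / 8.5) (1 / 8.5) t := by
    simpa using ((hasDerivAt_id t).add_const 18).div_const 8.5
  have h2 : HasDerivAt (fun t : ℝ => Real.log ((t + 18) / 8.5))
      ((1 / 8.5) / ((t + 18) / 8.5)) t := h1.log (by positivity)
  have h3 : HasDerivAt (fun t : ℝ => 1 / t) (-(1 / t ^ 2)) t := by
    simpa [one_div] using hasDerivAt_inv ht.ne'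
  have : HasDerivAt fω _ t := h3.fun_mul h2
  convert this using 1
  field_simp

private lemma hd2 {t : ℝ} (ht : 0 < t) :
    HasDerivAt gω
      ((2 / t ^ 3) * Real.log ((t + 18) / 8.5)
        + (-(1 / t ^ 2)) * (1 / (t + 18))
        + ((-(1 / t ^ 2)) * (1 / (t + 18)) + (1 / t) * (-(1 / (t + 18) ^ 2)))) t := by
  have ht18 : (0:ℝ) < t + 18 := by linarith
  have h1 : HasDerivAt (fun t : ℝ => (t + 18) / 8.5) (1 / 8.5) t := by
    simpa using ((hasDerivAt_id t).add_const 18).div_const 8.5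
  have h2 : HasDerivAt (fun t : ℝ => Real.log ((t + 18) / 8.5))
      ((1 / 8.5) / ((t + 18) / 8.5)) t := h1.log (by positivity)
  have h3 : HasDerivAt (fun t : ℝ => 1 / t) (-(1 / t ^ 2)) t := by
    simpa [one_div] using hasDerivAt_inv ht.ne'
  have h4 : HasDerivAt (fun t : ℝ => -(1 / t ^ 2)) (2 / t ^ 3) t := by
    have : HasDerivAt (fun t : ℝ => t ^ 2) (2 * t) t := by
      simpa using hasDerivAt_pow 2 t
    have : HasDerivAt (fun i : ℝ => -(i ^ 2)⁻¹) _ t := (this.fun_inv (by positivity)).fun_neg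
    convert this using 1
    · ext x; simp [one_div]
    · field_simp
  have h5 : HasDerivAt (fun t : ℝ => 1 / (t + 18)) (-(1 / (t + 18) ^ 2)) t := by
    have : HasDerivAt (fun t : ℝ => t + 18) 1 t := (hasDerivAt_id t).add_const 18
    have h : HasDerivAt (fun i : ℝ => (i + 18)⁻¹) _ t := this.fun_inv ht18.ne'
    simpa [neg_div, one_div] using h
  have : HasDerivAt gω _ t := (h4.fun_mul h2).fun_add (h3.fun_mul h5)
  convert this using 1
  field_simp

private lemma deriv_fω {t : ℝ} (ht : 0 < t) : deriv fω t = gω t := (hd1 ht).deriv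

private lemma deriv2_fω {t : ℝ} (ht : 0 < t) :
    deriv (deriv fω) t =
      (1 / (t ^ 3 * (t + 18) ^ 2)) *
        (2 * (t + 18) ^ 2 * Real.log ((t + 18) / 8.5) - (3 * t ^ 2 + 36 * t)) := by
  have heq : deriv fω =ᶠ[nhds t] gω := by
    filter_upwards [Ioi_mem_nhds ht] with x hx
    exact deriv_fω hx
  rw [Filter.EventuallyEq.deriv_eq heq, (hd2 ht).deriv]
  have ht18 : (0:ℝ) < t + 18 := by linarith
  field_simp
  ring

private lemma log_ge {t : ℝ} (ht : 107.5 ≤ t) : (2:ℝ) ≤ Real.log ((t + 18) / 8.5) := by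
  have ht18 : (0:ℝ) < t + 18 := by linarith
  rw [Real.le_log_iff_exp_le (by positivity), le_div_iff₀ (by norm_num)]
  have h1 : Real.exp 1 < 2.7182818286 := Real.exp_one_lt_d9
  have h2 : Real.exp 2 = Real.exp 1 ^ 2 := by
    rw [← Real.exp_nat_mul]; norm_num
  have h3 : (0:ℝ) < Real.exp 1 := Real.exp_pos 1
  nlinarith [h1, h2, h3]

private lemma bracket_nonneg {t : ℝ} (ht : 107.5 ≤ t) :
    0 ≤ (1 / (t ^ 3 * (t + 18) ^ 2)) *
        (2 * (t + 18) ^ 2 * Real.log ((t + 18) / 8.5) - (3 * t ^ 2 + 36 * t)) := by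
  have ht0 : (0:ℝ) < t := by linarith
  have hL := log_ge ht
  have hb : 0 ≤ 2 * (t + 18) ^ 2 * Real.log ((t + 18) / 8.5) - (3 * t ^ 2 + 36 * t) := by
    nlinarith [sq_nonneg (t + 18)]
  positivity

theorem omega_convex :
    ConvexOn ℝ (Set.Ici (107.5 : ℝ)) (fun t => (1 / t) * Real.log ((t + 18) / 8.5)) ∧
    ∀ t : ℝ, 107.5 ≤ t →
      deriv (deriv (fun t : ℝ => (1 / t) * Real.log ((t + 18) / 8.5))) t =
        (1 / (t ^ 3 * (t + 18) ^ 2)) *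
          (2 * (t + 18) ^ 2 * Real.log ((t + 18) / 8.5) - (3 * t ^ 2 + 36 * t)) ∧
      0 ≤ (1 / (t ^ 3 * (t + 18) ^ 2)) *
          (2 * (t + 18) ^ 2 * Real.log ((t + 18) / 8.5) - (3 * t ^ 2 + 36 * t)) := by
  have hfeq : (fun t : ℝ => (1 / t) * Real.log ((t + 18) / 8.5)) = fω := rfl
  constructor
  · rw [hfeq]
    apply convexOn_of_deriv2_nonneg (convex_Ici _)
    · intro x hx
      have hx0 : (0:ℝ) < x := lt_of_lt_of_le (by norm_num) hx
      exact (hd1 hx0).continuousAt.continuousWithinAt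
    · intro x hx
      rw [interior_Ici] at hx
      have hx0 : (0:ℝ) < x := lt_trans (by norm_num) hx
      exact ((hd1 hx0).differentiableAt).differentiableWithinAt
    · intro x hx
      rw [interior_Ici] at hx
      have hx0 : (0:ℝ) < x := lt_trans (by norm_num) hx
      have heq : deriv fω =ᶠ[nhds x] gω := by
        filter_upwards [Ioi_mem_nhds hx0] with y hy
        exact deriv_fω hy
      exact (heq.differentiableAt_iff.mpr (hd2 hx0).differentiableAt).differentiableWithinAt
    · intro x hx
      rw [interior_Ici] at hx
      have hx0 : (0:ℝ) < x := lt_trans (by norm_num) hx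
      have := deriv2_fω hx0
      simp only [Function.iterate_succ, Function.iterate_zero, Function.comp_apply, id_eq]
      rw [this]
      exact bracket_nonneg (le_of_lt hx)
  · intro t ht
    have ht0 : (0:ℝ) < t := by linarith
    refine ⟨?_, bracket_nonneg ht⟩
    rw [hfeq]
    exact deriv2_fω ht0
end

section
/- For every integer n ≥ 109, ∫_{107.5}^{n−0.5} (1/t)·ln(1 + 18/t) dt ≤ (9/8)·ln(119.5/107.5) + 9/215. -/
open Real

lemma log_pade (x : ℝ) (hx : 0 ≤ x) : Real.log (1 + x) ≤ x * (x + 6) / (4 * x + 6) := by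
  set f : ℝ → ℝ := fun x => x * (x + 6) / (4 * x + 6) - Real.log (1 + x) with hf
  have key : ∀ y ∈ Set.Ici (0:ℝ), 0 ≤ f y := by
    have hmono : MonotoneOn f (Set.Ici (0:ℝ)) := by
      have hderiv : ∀ y ∈ Set.Ioi (0:ℝ), HasDerivAt f
          (((2*y+6)*(4*y+6) - y*(y+6)*4)/(4*y+6)^2 - 1/(1+y)) y := by
        intro y hy
        have hy0 : (0:ℝ) < y := hy
        have h1 : HasDerivAt (fun y : ℝ => y * (y + 6)) (2*y+6) y := by
          have := (hasDerivAt_id y).mul ((hasDerivAt_id y).add_const 6)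
          refine this.congr_deriv ?_ <;> simp <;> ring
        have h2 : HasDerivAt (fun y : ℝ => 4 * y + 6) 4 y := by
          have := ((hasDerivAt_id y).const_mul 4).add_const 6
          refine this.congr_deriv ?_ <;> simp
        have hne : 4*y+6 ≠ 0 := by nlinarith
        have hdiv := h1.div h2 hne
        have h3 : HasDerivAt (fun y : ℝ => Real.log (1+y)) (1/(1+y)) y := by
          have := (Real.hasDerivAt_log (by nlinarith : (1:ℝ)+y ≠ 0)).comp y
            ((hasDerivAt_id y).const_add 1)
          refine this.congr_deriv ?_; simp
        exact hdiv.sub h3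
      apply monotoneOn_of_deriv_nonneg (convex_Ici 0)
      · apply ContinuousOn.sub
        · apply ContinuousOn.div (by fun_prop) (by fun_prop)
          intro y hy; simp at hy; nlinarith
        · apply ContinuousOn.log (by fun_prop)
          intro y hy; simp at hy; nlinarith
      · intro y hy
        rw [interior_Ici] at hy
        exact (hderiv y hy).differentiableAt.differentiableWithinAt
      · intro y hy
        rw [interior_Ici] at hy
        have hy0 : (0:ℝ) < y := hy
        rw [(hderiv y hy).deriv]
        rw [sub_nonneg, div_le_div_iff₀ (by positivity) (by positivity)]
        nlinarith [pow_pos hy0 3]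
    intro y hy
    have h0 : f 0 = 0 := by simp [hf]
    have := hmono (Set.self_mem_Ici) hy hy
    linarith
  have := key x hx
  simp only [hf] at this
  linarith

theorem integral_bound_11 (n : ℕ) (hn : 109 ≤ n) :
    ∫ t in (107.5 : ℝ)..((n : ℝ) - 0.5), (1 / t) * Real.log (1 + 18 / t) ≤
      (9 / 8) * Real.log (119.5 / 107.5) + 9 / 215 := by
  set b : ℝ := (n : ℝ) - 0.5 with hb
  have hnb : (109:ℝ) ≤ (n:ℝ) := by exact_mod_cast hn
  have hab : (107.5:ℝ) ≤ b := by rw [hb]; norm_num; linarith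
  have hbpos : (0:ℝ) < b := lt_of_lt_of_le (by norm_num) hab
  -- pointwise bound
  have hpt : ∀ t ∈ Set.Icc (107.5:ℝ) b,
      (1 / t) * Real.log (1 + 18 / t) ≤ 27/(2*(t*(t+12))) + 9/(2*t^2) := by
    intro t ht
    obtain ⟨ht1, ht2⟩ := ht
    have ht0 : (0:ℝ) < t := by linarith
    have h := log_pade (18/t) (by positivity)
    have heq : (1/t) * ((18/t) * (18/t + 6) / (4 * (18/t) + 6)) = 27/(2*(t*(t+12))) + 9/(2*t^2) := by
      field_simp
      ring
    calc (1/t) * Real.log (1 + 18/t) ≤ (1/t) * ((18/t) * (18/t + 6) / (4 * (18/t) + 6)) := by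
          apply mul_le_mul_of_nonneg_left h (by positivity)
      _ = 27/(2*(t*(t+12))) + 9/(2*t^2) := heq
  -- integrability
  have hne : ∀ t ∈ Set.Icc (107.5:ℝ) b, t ≠ 0 := by
    intro t ht h; rw [h] at ht; exact absurd ht.1 (by norm_num)
  have hcont1 : ContinuousOn (fun t : ℝ => (1 / t) * Real.log (1 + 18 / t)) (Set.Icc 107.5 b) := by
    apply ContinuousOn.mul
    · exact ContinuousOn.div continuousOn_const continuousOn_id hne
    · apply ContinuousOn.log
      · exact ContinuousOn.add continuousOn_const
          (ContinuousOn.div continuousOn_const continuousOn_id hne)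
      · intro t ht
        have : (0:ℝ) < t := lt_of_lt_of_le (by norm_num) ht.1
        positivity
  have hcont2 : ContinuousOn (fun t : ℝ => 27/(2*(t*(t+12))) + 9/(2*t^2)) (Set.Icc 107.5 b) := by
    apply ContinuousOn.add <;>
    · apply ContinuousOn.div continuousOn_const (by fun_prop)
      intro t ht
      have : (0:ℝ) < t := lt_of_lt_of_le (by norm_num) ht.1
      positivity
  have hint1 : IntervalIntegrable (fun t : ℝ => (1 / t) * Real.log (1 + 18 / t))
      MeasureTheory.volume 107.5 b := hcont1.intervalIntegrable_of_Icc hab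
  have hint2 : IntervalIntegrable (fun t : ℝ => 27/(2*(t*(t+12))) + 9/(2*t^2))
      MeasureTheory.volume 107.5 b := hcont2.intervalIntegrable_of_Icc hab
  have hmono := intervalIntegral.integral_mono_on hab hint1 hint2 hpt
  -- compute ∫ of majorant via FTC
  set G : ℝ → ℝ := fun t => (9/8) * (Real.log t - Real.log (t + 12)) - 9/(2*t) with hG
  have hFTC : ∫ t in (107.5:ℝ)..b, (27/(2*(t*(t+12))) + 9/(2*t^2)) = G b - G 107.5 := by
    apply intervalIntegral.integral_eq_sub_of_hasDerivAt
    · intro t ht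
      rw [Set.uIcc_of_le hab] at ht
      obtain ⟨ht1, ht2⟩ := ht
      have ht0 : (0:ℝ) < t := by linarith
      have h1 : HasDerivAt (fun t : ℝ => Real.log t) (1/t) t := by
        simpa using Real.hasDerivAt_log ht0.ne'
      have h2 : HasDerivAt (fun t : ℝ => Real.log (t+12)) (1/(t+12)) t := by
        have := (Real.hasDerivAt_log (by linarith : t+12 ≠ 0)).comp t
          ((hasDerivAt_id t).add_const 12)
        refine this.congr_deriv ?_; simp
      have h3 : HasDerivAt (fun t : ℝ => 9/(2*t)) (-(9/(2*t^2))) t := by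
        have h4 : HasDerivAt (fun t : ℝ => 2*t) 2 t := by
          have := (hasDerivAt_id t).const_mul 2
          refine this.congr_deriv ?_ <;> simp
        have := (hasDerivAt_const t (9:ℝ)).div h4 (by positivity)
        refine this.congr_deriv ?_
        field_simp
        ring
      have := (((h1.sub h2).const_mul (9/8)).sub h3)
      refine this.congr_deriv ?_
      field_simp
      ring
    · exact hint2
  rw [hFTC] at hmono
  refine le_trans hmono ?_
  have h1 : Real.log b ≤ Real.log (b+12) :=
    Real.log_le_log hbpos (by linarith)
  have h2 : (0:ℝ) < 9/(2*b) := by positivity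
  have h3 : Real.log ((119.5:ℝ)/107.5) = Real.log 119.5 - Real.log 107.5 :=
    Real.log_div (by norm_num) (by norm_num)
  have hGa : G 107.5 = (9/8) * (Real.log 107.5 - Real.log 119.5) - 9/215 := by
    rw [hG]; norm_num
  have hGb : G b = (9/8) * (Real.log b - Real.log (b+12)) - 9/(2*b) := rfl
  rw [hGa, hGb, h3]
  linarith
end

section
/- For every integer n ≥ 109, the quantity (n/8.5 + 2) · 2^{827/420} · 3^{−8/15} · 79.06 · ∏_{k=109}^{n} (k/8.5 + 2)^{1/(k−1)} is strictly less than 8.1 · (n/8.5 + 2) · ((2n − 1)/17)^{(1/2)·ln((2n − 1)/17)}. -/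
open Real Finset

lemma taylor_bounds {y : ℝ} (h0 : 0 ≤ y) (h1 : y < 1) (n : ℕ) :
    -(y ^ (n + 1) / (1 - y)) ≤ (∑ i ∈ Finset.range n, y ^ (i + 1) / (i + 1)) + Real.log (1 - y) ∧
      (∑ i ∈ Finset.range n, y ^ (i + 1) / (i + 1)) + Real.log (1 - y) ≤ y ^ (n + 1) / (1 - y) := by
  have h := Real.abs_log_sub_add_sum_range_le (x := y) (by rw [abs_of_nonneg h0]; exact h1) n
  rw [abs_of_nonneg h0] at h
  exact abs_le.mp h

lemma l3bounds : 1.0986121 ≤ Real.log 3 ∧ Real.log 3 ≤ 1.0986124 := by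
  obtain ⟨h1, h2⟩ := taylor_bounds (y := 1/9) (by norm_num) (by norm_num) 6
  have hs : (∑ i ∈ Finset.range 6, (1/9 : ℝ) ^ (i + 1) / (i + 1)) = 3755683/31886460 := by
    norm_num [Finset.sum_range_succ]
  have hl : Real.log (1 - 1/9 : ℝ) = 3 * Real.log 2 - 2 * Real.log 3 := by
    rw [show (1 - 1/9 : ℝ) = 2^3/3^2 by norm_num,
      Real.log_div (by norm_num) (by norm_num), Real.log_pow, Real.log_pow]
    push_cast; ring
  rw [hs, hl] at h1 h2
  have h2l := Real.log_two_gt_d9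
  have h2u := Real.log_two_lt_d9
  norm_num at h1 h2 ⊢
  constructor <;> linarith

lemma l5hi : Real.log 5 ≤ 1.6094386 := by
  obtain ⟨h1, _⟩ := taylor_bounds (y := 1/5) (by norm_num) (by norm_num) 8
  have hs : (∑ i ∈ Finset.range 8, (1/5 : ℝ) ^ (i + 1) / (i + 1)) = 14643791/65625000 := by
    norm_num [Finset.sum_range_succ]
  have hl : Real.log (1 - 1/5 : ℝ) = 2 * Real.log 2 - Real.log 5 := by
    rw [show (1 - 1/5 : ℝ) = 2^2/5 by norm_num,
      Real.log_div (by norm_num) (by norm_num), Real.log_pow]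
    push_cast; ring
  rw [hs, hl] at h1
  have h2l := Real.log_two_gt_d9
  have h2u := Real.log_two_lt_d9
  norm_num at h1 ⊢
  linarith

lemma l79hi : Real.log 79.06 ≤ 4.3702092 := by
  obtain ⟨_, h2⟩ := taylor_bounds (y := 97/4050) (by norm_num) (by norm_num) 3
  have hs : (∑ i ∈ Finset.range 3, (97/4050 : ℝ) ^ (i + 1) / (i + 1)) = 603899981/24911296875 := by
    norm_num [Finset.sum_range_succ]
  have hl : Real.log (1 - 97/4050 : ℝ) = Real.log 79.06 - 4 * Real.log 3 := by
    rw [show (1 - 97/4050 : ℝ) = 79.06/3^4 by norm_num,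
      Real.log_div (by norm_num) (by norm_num), Real.log_pow]
    push_cast; ring
  rw [hs, hl] at h2
  have h3 := l3bounds
  norm_num at h2 ⊢
  linarith [h3.2]

lemma l81lo : 2.0918622 ≤ Real.log 8.1 := by
  have hl : Real.log 8.1 = 4 * Real.log 3 - Real.log 2 - Real.log 5 := by
    rw [show (8.1 : ℝ) = 3^4/(2*5) by norm_num,
      Real.log_div (by norm_num) (by norm_num), Real.log_mul (by norm_num) (by norm_num),
      Real.log_pow]
    push_cast; ring
  have h2u := Real.log_two_lt_d9
  have h3 := l3bounds
  have h5 := l5hi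
  rw [hl]
  norm_num at h5 ⊢
  linarith [h3.1]

lemma lLlo : 2.5466828 ≤ Real.log (217/17) := by
  obtain ⟨h1, _⟩ := taylor_bounds (y := 3/1088) (by norm_num) (by norm_num) 2
  have hs : (∑ i ∈ Finset.range 2, (3/1088 : ℝ) ^ (i + 1) / (i + 1)) = 6537/2367488 := by
    norm_num [Finset.sum_range_succ]
  have hl : Real.log (1 - 3/1088 : ℝ) = Real.log (217/17) - 6 * Real.log 2 + Real.log 5 := by
    rw [show (1 - 3/1088 : ℝ) = (217/17)/(2^6/5) by norm_num,
      Real.log_div (by norm_num : (217/17 : ℝ) ≠ 0) (by norm_num : ((2:ℝ)^6/5 : ℝ) ≠ 0),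
      Real.log_div (by norm_num : ((2:ℝ)^6 : ℝ) ≠ 0) (by norm_num : (5 : ℝ) ≠ 0),
      Real.log_pow]
    push_cast; ring
  rw [hs, hl] at h1
  have h2l := Real.log_two_gt_d9
  have h5 := l5hi
  norm_num at h1 h5 ⊢
  linarith

lemma lfhi : Real.log (252/17) ≤ 2.6990594 := by
  have hl : Real.log (252/17 : ℝ) = 4 * Real.log 2 + Real.log (63/68) := by
    rw [show (252/17 : ℝ) = 2^4 * (63/68) by norm_num,
      Real.log_mul (by norm_num) (by norm_num), Real.log_pow]
    push_cast; ring
  have h63 : Real.log (63/68 : ℝ) ≤ 63/68 - 1 := Real.log_le_sub_one_of_pos (by norm_num)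
  have h2u := Real.log_two_lt_d9
  rw [hl]
  norm_num at h63 ⊢
  linarith

-- rational certificate for the induction step
lemma rat_key (x : ℝ) (hx : 110 ≤ x) :
    ((2*x-1)/272 + 1.77259) * (1/((x-1)*(2*x-1)^2) + 8/((2*x-1)^2*(2*x-3)))
      + (35/(2*x+34) + (35/(2*x+34))^2/2 + (35/(2*x+34))^3/3
          + (35/(2*x+34))^4 * ((2*x+34)/(2*x-1))) * (1/(x-1))
      + (2/(2*x-3))^2/2
      ≤ 361/(20*x+50) - 361/(20*x+70) := by
  have h1 : (0:ℝ) < x - 1 := by linarith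
  have h2 : (0:ℝ) < 2*x - 1 := by linarith
  have h3 : (0:ℝ) < 2*x - 3 := by linarith
  have h4 : (0:ℝ) < 2*x + 34 := by linarith
  have h5 : (0:ℝ) < 20*x + 50 := by linarith
  have h6 : (0:ℝ) < 20*x + 70 := by linarith
  have hs : (0:ℝ) ≤ x - 110 := by linarith
  rw [← sub_nonneg]
  have heq : 361/(20*x+50) - 361/(20*x+70)
      - (((2*x-1)/272 + 1.77259) * (1/((x-1)*(2*x-1)^2) + 8/((2*x-1)^2*(2*x-3)))
        + (35/(2*x+34) + (35/(2*x+34))^2/2 + (35/(2*x+34))^3/3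
            + (35/(2*x+34))^4 * ((2*x+34)/(2*x-1))) * (1/(x-1))
        + (2/(2*x-3))^2/2)
      = (26640000*x^9 + 11060686560*x^8 - 148457222416*x^7 - 60488700527520*x^6
          - 274724321323616*x^5 + 1143771781213142*x^4 - 497443621940709*x^3
          - 1197512095943339*x^2 + 1040103198468069*x - 220447471280115)
        / (6375*(x-1)*(2*x-1)^3*(2*x-3)^2*(2*x+34)^3*(20*x+50)*(20*x+70)) := by
    have : x*2-1 ≠ 0 := by linarith
    have : x*2-3 ≠ 0 := by linarith
    have : x*2+34 ≠ 0 := by linarith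
    have : x*20+50 ≠ 0 := by linarith
    have : x*20+70 ≠ 0 := by linarith
    field_simp
    ring
  rw [heq]
  apply div_nonneg
  · nlinarith [pow_nonneg hs 2, pow_nonneg hs 3, pow_nonneg hs 4, pow_nonneg hs 5,
      pow_nonneg hs 6, pow_nonneg hs 7, pow_nonneg hs 8, pow_nonneg hs 9, hs]
  · positivity

lemma step_lemma (x : ℝ) (hx : 110 ≤ x) :
    Real.log ((2*x+34)/17) * (1/(x-1)) + 361/(20*x+70) ≤
      361/(20*x+50) + ((Real.log ((2*x-1)/17))^2/2 - (Real.log ((2*x-3)/17))^2/2) := by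
  have h1 : (0:ℝ) < x - 1 := by linarith
  have h2 : (0:ℝ) < 2*x - 1 := by linarith
  have h3 : (0:ℝ) < 2*x - 3 := by linarith
  have h4 : (0:ℝ) < 2*x + 34 := by linarith
  set P := Real.log ((2*x-1)/17) with hPdef
  set Q := Real.log ((2*x-3)/17) with hQdef
  set v := Real.log ((2*x-1)/(2*x-3)) with hvdef
  set w := Real.log ((2*x+34)/(2*x-1)) with hwdef
  -- splitting identities
  have hsplitf : Real.log ((2*x+34)/17) = P + w := by
    rw [hPdef, hwdef, ← Real.log_mul (by positivity) (by positivity)]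
    congr 1
    field_simp
  have hQv : Q = P - v := by
    rw [hPdef, hQdef, hvdef, ← Real.log_div (by positivity) (by positivity)]
    congr 1
    rw [div_div_div_eq]
    rw [div_eq_div_iff (by positivity) (by positivity)]
    ring
  -- basic bounds on v
  have hv0 : 0 ≤ v := Real.log_nonneg (by rw [le_div_iff₀ h3]; linarith)
  have hvhi : v ≤ 2/(2*x-3) := by
    have := Real.log_le_sub_one_of_pos (show (0:ℝ) < (2*x-1)/(2*x-3) by positivity)
    have heq : (2*x-1)/(2*x-3) - 1 = 2/(2*x-3) := by field_simp; ring
    rw [hvdef]; linarith [heq ▸ this]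
  -- lower bound on v via Taylor with y = 2/(2x-1)
  have hy0 : (0:ℝ) ≤ 2/(2*x-1) := by positivity
  have hy1 : 2/(2*x-1) < 1 := by rw [div_lt_one h2]; linarith
  have h1my : 1 - 2/(2*x-1) = (2*x-3)/(2*x-1) := by field_simp; ring
  have hlog1my : Real.log (1 - 2/(2*x-1)) = -v := by
    rw [h1my, hvdef, show (2*x-3)/(2*x-1) = ((2*x-1)/(2*x-3))⁻¹ by rw [inv_div],
      Real.log_inv]
  obtain ⟨_, hv1⟩ := taylor_bounds hy0 hy1 2
  have hsum2 : (∑ i ∈ Finset.range 2, (2/(2*x-1)) ^ (i + 1) / (i + 1))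
      = 2/(2*x-1) + (2/(2*x-1))^2/2 := by
    norm_num [Finset.sum_range_succ]
  rw [hsum2, hlog1my, h1my] at hv1
  have hvlo : 2/(2*x-1) + (2/(2*x-1))^2/2 - (2/(2*x-1))^3 * ((2*x-1)/(2*x-3)) ≤ v := by
    have hrem : (2/(2*x-1)) ^ (2+1) / ((2*x-3)/(2*x-1))
        = (2/(2*x-1))^3 * ((2*x-1)/(2*x-3)) := by
      rw [div_div_eq_mul_div]; ring
    rw [hrem] at hv1
    linarith
  -- upper bound on w via Taylor with y = 35/(2x+34)
  have hm0 : (0:ℝ) ≤ 35/(2*x+34) := by positivity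
  have hm1 : 35/(2*x+34) < 1 := by rw [div_lt_one h4]; linarith
  have h1mm : 1 - 35/(2*x+34) = (2*x-1)/(2*x+34) := by field_simp; ring
  have hlog1mm : Real.log (1 - 35/(2*x+34)) = -w := by
    rw [h1mm, hwdef, show (2*x-1)/(2*x+34) = ((2*x+34)/(2*x-1))⁻¹ by rw [inv_div],
      Real.log_inv]
  obtain ⟨hw2, _⟩ := taylor_bounds hm0 hm1 3
  have hsum3 : (∑ i ∈ Finset.range 3, (35/(2*x+34)) ^ (i + 1) / (i + 1))
      = 35/(2*x+34) + (35/(2*x+34))^2/2 + (35/(2*x+34))^3/3 := by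
    norm_num [Finset.sum_range_succ]
  rw [hsum3, hlog1mm, h1mm] at hw2
  have hwhi : w ≤ 35/(2*x+34) + (35/(2*x+34))^2/2 + (35/(2*x+34))^3/3
      + (35/(2*x+34))^4 * ((2*x+34)/(2*x-1)) := by
    have hrem : (35/(2*x+34)) ^ (3+1) / ((2*x-1)/(2*x+34))
        = (35/(2*x+34))^4 * ((2*x+34)/(2*x-1)) := by
      rw [div_div_eq_mul_div]; ring
    rw [hrem] at hw2
    linarith
  -- bounds on P
  have hP0 : 0 ≤ P := Real.log_nonneg (by rw [le_div_iff₀ (by norm_num : (0:ℝ) < 17)]; linarith)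
  have hPhi : P ≤ (2*x-1)/272 + 1.77259 := by
    have hsplit : (2*x-1)/17 = 2^4 * ((2*x-1)/272) := by ring
    have h16 : Real.log ((2*x-1)/17) = 4 * Real.log 2 + Real.log ((2*x-1)/272) := by
      rw [hsplit, Real.log_mul (by norm_num) (by positivity), Real.log_pow]
      push_cast; ring
    have hlin := Real.log_le_sub_one_of_pos (show (0:ℝ) < (2*x-1)/272 by positivity)
    have h2u := Real.log_two_lt_d9
    rw [hPdef, h16]
    norm_num at h2u ⊢
    linarith
  -- coefficient identity
  have hc0 : 1/(x-1) - (2/(2*x-1) + (2/(2*x-1))^2/2 - (2/(2*x-1))^3 * ((2*x-1)/(2*x-3)))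
      = 1/((x-1)*(2*x-1)^2) + 8/((2*x-1)^2*(2*x-3)) := by
    have : x*2-1 ≠ 0 := by linarith
    have : x*2-3 ≠ 0 := by linarith
    field_simp
    ring
  have hc0nn : (0:ℝ) ≤ 1/((x-1)*(2*x-1)^2) + 8/((2*x-1)^2*(2*x-3)) := by positivity
  -- products
  have hb1 : P * (1/(x-1) - v) ≤ P * (1/((x-1)*(2*x-1)^2) + 8/((2*x-1)^2*(2*x-3))) := by
    apply mul_le_mul_of_nonneg_left _ hP0
    linarith
  have hb2 : P * (1/((x-1)*(2*x-1)^2) + 8/((2*x-1)^2*(2*x-3)))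
      ≤ ((2*x-1)/272 + 1.77259) * (1/((x-1)*(2*x-1)^2) + 8/((2*x-1)^2*(2*x-3))) :=
    mul_le_mul_of_nonneg_right hPhi hc0nn
  have hb3 : w * (1/(x-1)) ≤ (35/(2*x+34) + (35/(2*x+34))^2/2 + (35/(2*x+34))^3/3
      + (35/(2*x+34))^4 * ((2*x+34)/(2*x-1))) * (1/(x-1)) := by
    apply mul_le_mul_of_nonneg_right hwhi
    positivity
  have hb4 : v^2 ≤ (2/(2*x-3))^2 := by
    apply pow_le_pow_left₀ hv0 hvhi
  have hkey := rat_key x hx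
  have hTQ : P^2/2 - Q^2/2 = P*v - v^2/2 := by rw [hQv]; ring
  have hring : Real.log ((2*x+34)/17) * (1/(x-1)) - (P*v - v^2/2)
      = P * (1/(x-1) - v) + w * (1/(x-1)) + v^2/2 := by
    rw [hsplitf]; ring
  linarith

lemma main_ind (n : ℕ) (hn : 109 ≤ n) :
    827/420 * Real.log 2 - 8/15 * Real.log 3 + Real.log 79.06 +
      (∑ k ∈ Finset.Icc 109 n, Real.log ((k : ℝ)/8.5 + 2) * (1/((k : ℝ)-1))) +
      361/(20*(n : ℝ)+70) ≤ Real.log 8.1 + (Real.log ((2*(n : ℝ)-1)/17))^2/2 := by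
  induction n, hn using Nat.le_induction with
  | base =>
    rw [show Finset.Icc 109 109 = {109} from rfl, Finset.sum_singleton]
    have e1 : ((109 : ℕ) : ℝ)/8.5 + 2 = 252/17 := by norm_num
    have e2 : (2*((109 : ℕ) : ℝ)-1)/17 = 217/17 := by norm_num
    rw [e1, e2]
    have h2u := Real.log_two_lt_d9
    have h3 := l3bounds.1
    have h79 := l79hi
    have h81 := l81lo
    have hL := lLlo
    have hf := lfhi
    have hL0 : (0:ℝ) ≤ 2.5466828 := by norm_num
    have hLsq : (2.5466828:ℝ)^2 ≤ (Real.log (217/17))^2 := by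
      apply pow_le_pow_left₀ hL0 hL
    have hc : (((109 : ℕ) : ℝ) - 1) = 108 := by norm_num
    rw [hc]
    norm_num at h2u h3 h79 h81 hf hLsq ⊢
    nlinarith [hLsq]
  | succ n hn ih =>
    have hx : (110 : ℝ) ≤ (n : ℝ) + 1 := by
      have : (109 : ℝ) ≤ (n : ℝ) := by exact_mod_cast hn
      linarith
    rw [Finset.sum_Icc_succ_top (by omega : 109 ≤ n + 1)]
    have hstep := step_lemma ((n : ℝ) + 1) hx
    have ecast : ((n + 1 : ℕ) : ℝ) = (n : ℝ) + 1 := by push_cast; ring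
    have e1 : ((n + 1 : ℕ) : ℝ)/8.5 + 2 = (2*((n : ℝ)+1)+34)/17 := by
      rw [ecast, show (8.5:ℝ) = 17/2 by norm_num]
      field_simp
      ring
    have e2 : 1/(((n + 1 : ℕ) : ℝ) - 1) = 1/(((n : ℝ)+1) - 1) := by rw [ecast]
    have e3 : (2*((n + 1 : ℕ) : ℝ)-1)/17 = (2*((n : ℝ)+1)-1)/17 := by rw [ecast]
    have e4 : (361 : ℝ)/(20*((n + 1 : ℕ) : ℝ)+70) = 361/(20*((n : ℝ)+1)+70) := by rw [ecast]
    have e5 : (2*((n : ℝ)+1)-3)/17 = (2*(n : ℝ)-1)/17 := by ring_nf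
    have e6 : (361 : ℝ)/(20*((n : ℝ)+1)+50) = 361/(20*(n : ℝ)+70) := by ring_nf
    rw [e5, e6] at hstep
    rw [e1, e2, e3, e4]
    linarith

theorem kz_bound_16 (n : ℕ) (hn : 109 ≤ n) :
    ((n : ℝ) / 8.5 + 2) * (2 : ℝ) ^ ((827 : ℝ) / 420) * (3 : ℝ) ^ (-(8 : ℝ) / 15) * 79.06 *
        ∏ k ∈ Finset.Icc 109 n, ((k : ℝ) / 8.5 + 2) ^ (1 / ((k : ℝ) - 1)) <
      8.1 * ((n : ℝ) / 8.5 + 2) *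
        ((2 * (n : ℝ) - 1) / 17) ^ ((1 / 2) * Real.log ((2 * (n : ℝ) - 1) / 17)) := by
  have hn' : (109 : ℝ) ≤ (n : ℝ) := by exact_mod_cast hn
  have hb : (0 : ℝ) < (n : ℝ) / 8.5 + 2 := by positivity
  have hX : (0 : ℝ) < (2 * (n : ℝ) - 1) / 17 := by
    rw [div_pos_iff]; left; constructor <;> linarith
  have hprod : (∏ k ∈ Finset.Icc 109 n, ((k : ℝ) / 8.5 + 2) ^ (1 / ((k : ℝ) - 1)))
      = Real.exp (∑ k ∈ Finset.Icc 109 n, Real.log ((k : ℝ)/8.5 + 2) * (1/((k : ℝ)-1))) := by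
    rw [Real.exp_sum]
    apply Finset.prod_congr rfl
    intro k hk
    have hk109 : 109 ≤ k := (Finset.mem_Icc.mp hk).1
    have hk' : (109 : ℝ) ≤ (k : ℝ) := by exact_mod_cast hk109
    have hkb : (0 : ℝ) < (k : ℝ) / 8.5 + 2 := by positivity
    rw [Real.rpow_def_of_pos hkb]
  have h2 : (2 : ℝ) ^ ((827 : ℝ) / 420) = Real.exp (Real.log 2 * (827/420)) :=
    Real.rpow_def_of_pos (by norm_num) _
  have h3 : (3 : ℝ) ^ (-(8 : ℝ) / 15) = Real.exp (Real.log 3 * (-(8:ℝ)/15)) :=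
    Real.rpow_def_of_pos (by norm_num) _
  have h79 : (79.06 : ℝ) = Real.exp (Real.log 79.06) := (Real.exp_log (by norm_num)).symm
  have hR : ((2 * (n : ℝ) - 1) / 17) ^ ((1 / 2) * Real.log ((2 * (n : ℝ) - 1) / 17))
      = Real.exp (Real.log ((2 * (n : ℝ) - 1) / 17) * ((1 / 2) * Real.log ((2 * (n : ℝ) - 1) / 17))) :=
    Real.rpow_def_of_pos hX _
  set S := ∑ k ∈ Finset.Icc 109 n, Real.log ((k : ℝ)/8.5 + 2) * (1/((k : ℝ)-1)) with hS
  set L := Real.log ((2 * (n : ℝ) - 1) / 17) with hL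
  have hexplt : Real.exp (Real.log 2 * (827/420) + Real.log 3 * (-(8:ℝ)/15) + Real.log 79.06 + S)
      < Real.exp (Real.log 8.1 + L * ((1/2) * L)) := by
    rw [Real.exp_lt_exp]
    have hmain := main_ind n hn
    have ht : (0 : ℝ) < 361/(20*(n : ℝ)+70) := by positivity
    nlinarith [hmain, ht]
  calc ((n : ℝ) / 8.5 + 2) * (2 : ℝ) ^ ((827 : ℝ) / 420) * (3 : ℝ) ^ (-(8 : ℝ) / 15) * 79.06 *
        ∏ k ∈ Finset.Icc 109 n, ((k : ℝ) / 8.5 + 2) ^ (1 / ((k : ℝ) - 1))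
      = ((n : ℝ) / 8.5 + 2) *
          Real.exp (Real.log 2 * (827/420) + Real.log 3 * (-(8:ℝ)/15) + Real.log 79.06 + S) := by
        rw [hprod, h2, h3]
        nth_rewrite 1 [h79]
        simp only [Real.exp_add]
        ring
    _ < ((n : ℝ) / 8.5 + 2) * Real.exp (Real.log 8.1 + L * ((1/2) * L)) := by
        exact mul_lt_mul_of_pos_left hexplt hb
    _ = 8.1 * ((n : ℝ) / 8.5 + 2) *
        ((2 * (n : ℝ) - 1) / 17) ^ ((1 / 2) * Real.log ((2 * (n : ℝ) - 1) / 17)) := by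
        rw [hR, Real.exp_add, Real.exp_log (by norm_num : (0:ℝ) < 8.1)]
        ring
end
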